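/- Let γ, ν ∈ ℝ^ℓ be nonnegative vectors and let T be an extreme point of the convex set J^{γ,ν}_{ℓ,k}. For each row r ∈ [ℓ], let m_r and M_r denote the minimum and maximum entries of row r of T. Then for every column c ∈ [k] there is at most one row r ∈ [ℓ] with T(r,c) ∉ {m_r, M_r}. -/

import Mathlib

open scoped Classical ENNReal
open Finset

noncomputable section

/-- `p` is a probability distribution on `Fin k`. -/
def IsDist {k : ℕ} (p : Fin k → ℝ) : Prop :=
  (∀ i, 0 ≤ p i) ∧ ∑ i, p i = 1

/-- `T` is a channel from `[k]` to `[ℓ]`: nonnegative entries, columns sum to 1. -/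
def IsChannel {ℓ k : ℕ} (T : Matrix (Fin ℓ) (Fin k) ℝ) : Prop :=
  (∀ r c, 0 ≤ T r c) ∧ ∀ c, ∑ r, T r c = 1

/-- Squared Hellinger divergence `d_h²(p,q) = Σ_i (√p_i − √q_i)²`. -/
def hellingerSq {k : ℕ} (p q : Fin k → ℝ) : ℝ :=
  ∑ i, (Real.sqrt (p i) - Real.sqrt (q i)) ^ 2

/-- Total variation distance `d_TV(p,q) = (1/2) Σ_i |p_i − q_i|`. -/
def tvDist {k : ℕ} (p q : Fin k → ℝ) : ℝ :=
  (1 / 2) * ∑ i, |p i - q i|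

/-- `T` is an `ε`-LDP channel: `T(r,c) ≤ e^ε T(r,c')` for all rows `r`, columns `c, c'`. -/
def IsLDP {ℓ k : ℕ} (ε : ℝ) (T : Matrix (Fin ℓ) (Fin k) ℝ) : Prop :=
  IsChannel T ∧ ∀ r c c', T r c ≤ Real.exp ε * T r c'

/-- The LP family of channels `J^{γ,ν}_{ℓ,k}`:
channels `T` with `T(j,i) ≤ γ_j T(j,i') + ν_j` for all rows `j` and columns `i, i'`. -/
def IsLP {ℓ k : ℕ} (γ ν : Fin ℓ → ℝ) (T : Matrix (Fin ℓ) (Fin k) ℝ) : Prop :=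
  IsChannel T ∧ ∀ (j : Fin ℓ) (i i' : Fin k), T j i ≤ γ j * T j i' + ν j

/-- Minimum entry of row `r` of `T`. -/
def rowMin {ℓ k : ℕ} (T : Matrix (Fin ℓ) (Fin k) ℝ) (r : Fin ℓ) : ℝ :=
  sInf (Set.range fun c => T r c)

/-- Maximum entry of row `r` of `T`. -/
def rowMax {ℓ k : ℕ} (T : Matrix (Fin ℓ) (Fin k) ℝ) (r : Fin ℓ) : ℝ :=
  sSup (Set.range fun c => T r c)

/-- The entry `T(r,c)` is min-tight: `T(r,c) = m_r` and `M_r = γ_r m_r + ν_r`. -/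
def MinTight {ℓ k : ℕ} (γ ν : Fin ℓ → ℝ) (T : Matrix (Fin ℓ) (Fin k) ℝ)
    (r : Fin ℓ) (c : Fin k) : Prop :=
  T r c = rowMin T r ∧ rowMax T r = γ r * rowMin T r + ν r

/-- The entry `T(r,c)` is max-tight: `T(r,c) = M_r` and `M_r = γ_r m_r + ν_r`. -/
def MaxTight {ℓ k : ℕ} (γ ν : Fin ℓ → ℝ) (T : Matrix (Fin ℓ) (Fin k) ℝ)
    (r : Fin ℓ) (c : Fin k) : Prop :=
  T r c = rowMax T r ∧ rowMax T r = γ r * rowMin T r + ν r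

lemma rowMin_le {ℓ k : ℕ} (T : Matrix (Fin ℓ) (Fin k) ℝ) (r : Fin ℓ) (c : Fin k) :
    rowMin T r ≤ T r c :=
  csInf_le (Set.finite_range _).bddBelow ⟨c, rfl⟩

lemma le_rowMax {ℓ k : ℕ} (T : Matrix (Fin ℓ) (Fin k) ℝ) (r : Fin ℓ) (c : Fin k) :
    T r c ≤ rowMax T r :=
  le_csSup (Set.finite_range _).bddAbove ⟨c, rfl⟩

lemma exists_rowMin {ℓ k : ℕ} (T : Matrix (Fin ℓ) (Fin k) ℝ) (r : Fin ℓ) (c : Fin k) :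
    ∃ c0, T r c0 = rowMin T r := by
  have : Nonempty (Fin k) := ⟨c⟩
  obtain ⟨c0, h0⟩ := (Set.range_nonempty fun c => T r c).csInf_mem (Set.finite_range _)
  exact ⟨c0, h0⟩

lemma exists_rowMax {ℓ k : ℕ} (T : Matrix (Fin ℓ) (Fin k) ℝ) (r : Fin ℓ) (c : Fin k) :
    ∃ c0, T r c0 = rowMax T r := by
  have : Nonempty (Fin k) := ⟨c⟩
  obtain ⟨c0, h0⟩ := (Set.range_nonempty fun c => T r c).csSup_mem (Set.finite_range _)
  exact ⟨c0, h0⟩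

lemma rowMin_nonneg {ℓ k : ℕ} (T : Matrix (Fin ℓ) (Fin k) ℝ) (hTnn : ∀ r c, 0 ≤ T r c)
    (r : Fin ℓ) (c : Fin k) : 0 ≤ rowMin T r := by
  obtain ⟨c0, h0⟩ := exists_rowMin T r c
  exact h0 ▸ hTnn r c0

lemma rowMax_le_lp {ℓ k : ℕ} (γ ν : Fin ℓ → ℝ) (T : Matrix (Fin ℓ) (Fin k) ℝ)
    (hT : IsLP γ ν T) (r : Fin ℓ) (c : Fin k) :
    rowMax T r ≤ γ r * rowMin T r + ν r := by
  obtain ⟨c0, h0⟩ := exists_rowMax T r c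
  obtain ⟨c1, h1⟩ := exists_rowMin T r c
  rw [← h0, ← h1]
  exact hT.2 r c0 c1

/-- Perturbation lemma: adding `δ` at `(r,c)` and subtracting `δ` at `(r',c)` stays in the family. -/
lemma perturb {ℓ k : ℕ} (γ ν : Fin ℓ → ℝ) (hγ : ∀ j, 0 ≤ γ j)
    (T : Matrix (Fin ℓ) (Fin k) ℝ) (hT : IsLP γ ν T)
    (r r' : Fin ℓ) (c : Fin k) (hrr : r ≠ r') (δ : ℝ) (hδ0 : 0 ≤ δ)
    (ha : T r c + δ ≤ γ r * rowMin T r + ν r)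
    (hb : δ ≤ T r' c - rowMin T r') :
    IsLP γ ν (T + Matrix.of fun i j =>
      (if i = r ∧ j = c then δ else 0) + (if i = r' ∧ j = c then -δ else 0)) := by
  have hTnn := hT.1.1
  have hsum := hT.1.2
  have hlp := hT.2
  have hmax' := rowMax_le_lp γ ν T hT r' c
  have hmn' := rowMin_nonneg T hTnn r' c
  refine ⟨⟨?_, ?_⟩, ?_⟩
  · -- nonnegativity
    intro i j
    simp only [Matrix.add_apply, Matrix.of_apply]
    by_cases h1 : i = r ∧ j = c
    · obtain ⟨hi, hj⟩ := h1
      simp only [hi, hj, and_self, if_pos, hrr, false_and, if_false, add_zero, if_true]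
      have := hTnn r c
      linarith
    · by_cases h2 : i = r' ∧ j = c
      · obtain ⟨hi, hj⟩ := h2
        simp only [hi, hj, and_self, if_pos, Ne.symm hrr, false_and, if_false, zero_add, if_true]
        have := rowMin_le T r' c
        linarith
      · simp only [if_neg h1, if_neg h2, add_zero]
        exact hTnn i j
  · -- column sums
    intro j
    have hsplit : ∑ i, ((T : Matrix (Fin ℓ) (Fin k) ℝ) + Matrix.of fun i j =>
        (if i = r ∧ j = c then δ else 0) + (if i = r' ∧ j = c then -δ else 0)) i j
        = (∑ i, T i j) + ∑ i, ((if i = r ∧ j = c then δ else 0)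
            + (if i = r' ∧ j = c then -δ else 0)) := by
      simp only [Matrix.add_apply, Matrix.of_apply]
      exact Finset.sum_add_distrib
    rw [hsplit, hsum j]
    have hz : ∑ i, ((if i = r ∧ j = c then δ else 0) + (if i = r' ∧ j = c then -δ else 0)) = 0 := by
      by_cases hj : j = c
      · subst hj
        simp only [and_true]
        rw [Finset.sum_add_distrib]
        simp [Finset.sum_ite_eq']
      · simp [hj]
    rw [hz]; ring
  · -- LP constraints
    intro j i i'
    simp only [Matrix.add_apply, Matrix.of_apply]
    rcases eq_or_ne j r with rfl | hjr
    · -- row r, entries get +δ at column c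
      simp only [and_self, if_pos rfl, hrr, false_and, if_false, add_zero, true_and]
      have he' : (0:ℝ) ≤ if i' = c then δ else 0 := by positivity
      have hmono : γ j * rowMin T j ≤ γ j * (T j i' + if i' = c then δ else 0) :=
        mul_le_mul_of_nonneg_left (by linarith [rowMin_le T j i']) (hγ j)
      by_cases hi : i = c
      · simp only [if_pos hi]
        rw [hi]
        linarith
      · simp only [if_neg hi, add_zero]
        have h0 := hlp j i i'
        have : γ j * T j i' ≤ γ j * (T j i' + if i' = c then δ else 0) :=
          mul_le_mul_of_nonneg_left (by linarith) (hγ j)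
        linarith
    · rcases eq_or_ne j r' with rfl | hjr'
      · -- row r', entries get -δ at column c
        simp only [hjr, false_and, if_false, and_self, if_pos rfl, zero_add, true_and]
        have hei : (if i = c then -δ else 0) ≤ 0 := by
          split_ifs <;> linarith
        by_cases hi' : i' = c
        · simp only [if_pos hi']
          rw [hi']
          have h1 : T j i ≤ rowMax T j := le_rowMax T j i
          have h2 : γ j * rowMin T j ≤ γ j * (T j c + -δ) :=
            mul_le_mul_of_nonneg_left (by linarith) (hγ j)
          linarith
        · simp only [if_neg hi', add_zero]
          have h0 := hlp j i i'
          linarith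
      · simp only [hjr, hjr', false_and, if_false, add_zero]
        exact hlp j i i'


/-- An extreme point of the LP family has at most one free entry per column:
in each column, at most one row's entry differs from both the row minimum and maximum. -/
theorem stmt14 (k ℓ : ℕ) (γ ν : Fin ℓ → ℝ) (hγ : ∀ j, 0 ≤ γ j) (hν : ∀ j, 0 ≤ ν j)
    (T : Matrix (Fin ℓ) (Fin k) ℝ)
    (hT : T ∈ ({S : Matrix (Fin ℓ) (Fin k) ℝ | IsLP γ ν S}).extremePoints ℝ) :
    ∀ c : Fin k, ∀ r r' : Fin ℓ,
      T r c ≠ rowMin T r → T r c ≠ rowMax T r →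
      T r' c ≠ rowMin T r' → T r' c ≠ rowMax T r' → r = r' := by
  intro c r r' h1 h2 h3 h4
  by_contra hne
  have hTlp : IsLP γ ν T := hT.1
  have hTnn := hTlp.1.1
  have hmaxr := rowMax_le_lp γ ν T hTlp r c
  have hmaxr' := rowMax_le_lp γ ν T hTlp r' c
  have hlt1 : rowMin T r < T r c := lt_of_le_of_ne (rowMin_le T r c) (Ne.symm h1)
  have hlt2 : T r c < rowMax T r := lt_of_le_of_ne (le_rowMax T r c) h2
  have hlt3 : rowMin T r' < T r' c := lt_of_le_of_ne (rowMin_le T r' c) (Ne.symm h3)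
  have hlt4 : T r' c < rowMax T r' := lt_of_le_of_ne (le_rowMax T r' c) h4
  set δ : ℝ := min (min (γ r * rowMin T r + ν r - T r c) (T r c - rowMin T r))
      (min (γ r' * rowMin T r' + ν r' - T r' c) (T r' c - rowMin T r')) with hδdef
  have hδpos : 0 < δ := by
    apply lt_min <;> apply lt_min <;> linarith
  have hplus : IsLP γ ν (T + Matrix.of fun i j =>
      (if i = r ∧ j = c then δ else 0) + (if i = r' ∧ j = c then -δ else 0)) := by
    apply perturb γ ν hγ T hTlp r r' c hne δ hδpos.le
    · have : δ ≤ γ r * rowMin T r + ν r - T r c := le_trans (min_le_left _ _) (min_le_left _ _)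
      linarith
    · exact le_trans (min_le_right _ _) (min_le_right _ _)
  have hminus : IsLP γ ν (T - Matrix.of fun i j =>
      (if i = r ∧ j = c then δ else 0) + (if i = r' ∧ j = c then -δ else 0)) := by
    have h := perturb γ ν hγ T hTlp r' r c (Ne.symm hne) δ hδpos.le
      (by
        have : δ ≤ γ r' * rowMin T r' + ν r' - T r' c :=
          le_trans (min_le_right _ _) (min_le_left _ _)
        linarith)
      (le_trans (min_le_left _ _) (min_le_right _ _))
    have heq : (T - Matrix.of fun i j =>
        (if i = r ∧ j = c then δ else 0) + (if i = r' ∧ j = c then -δ else 0))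
        = T + Matrix.of fun i j =>
        (if i = r' ∧ j = c then δ else 0) + (if i = r ∧ j = c then -δ else 0) := by
      ext i j
      simp only [Matrix.sub_apply, Matrix.add_apply, Matrix.of_apply]
      split_ifs <;> ring
    rw [heq]; exact h
  set D : Matrix (Fin ℓ) (Fin k) ℝ := Matrix.of fun i j =>
      (if i = r ∧ j = c then δ else 0) + (if i = r' ∧ j = c then -δ else 0) with hD
  have hseg : T ∈ openSegment ℝ (T + D) (T - D) := by
    refine ⟨1/2, 1/2, by norm_num, by norm_num, by norm_num, ?_⟩
    ext i j
    simp only [Matrix.add_apply, Matrix.smul_apply, Matrix.sub_apply, smul_eq_mul]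
    ring
  have hfix := hT.2 hplus hminus hseg
  have hval : (T + D) r c = T r c := by rw [hfix]
  rw [Matrix.add_apply] at hval
  have hDrc : D r c = δ := by
    show (if r = r ∧ c = c then δ else 0) + (if r = r' ∧ c = c then -δ else 0) = δ
    simp [hne]
  rw [hDrc] at hval
  linarith
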